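/- Let T be a finite rooted tree with a friendly labeling function L : G → 𝓛, and let e be an interior edge of T. Let g = Π_{i=1}^d q_{(l_i,m_i)} − Π_{i=1}^d q_{(l'_i,m_i)} be a binomial in the toric ideal I_{T_{e,−},L}, written so that the labels m_1,…,m_d on the edge e agree row by row, and let n_1,…,n_d be labelings such that each (m_i, n_i) is a consistent labeling of T_{e,+}. Then every (l_i, m_i, n_i) and every (l'_i, m_i, n_i) is a consistent labeling of T, and the binomial g* = Π_{i=1}^d q_{(l_i,m_i,n_i)} − Π_{i=1}^d q_{(l'_i,m_i,n_i)} lies in the toric ideal I_{T,L}. -/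

import Mathlib

open MvPolynomial

attribute [local instance] Classical.propDecidable

/-- The set `Z_m ⊆ G^m` of tuples with `g_1 + ⋯ + g_{m-1} = g_m`. -/
def ZSet (G : Type) [AddCommGroup G] (m : ℕ) : Set (Fin m → G) :=
  {g | (∑ i ∈ Finset.univ.filter fun i : Fin m => (i : ℕ) < m - 1, g i) =
       ∑ i ∈ Finset.univ.filter fun i : Fin m => ¬ (i : ℕ) < m - 1, g i}

/-- A labeling function `L : G → 𝓛` is `m`-friendly if for every tuple in `Z_m`, every
value with the same label at a coordinate can be realized at that coordinate by another
tuple in `Z_m` with the same label vector. -/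
def IsMFriendly {G 𝓛 : Type} [AddCommGroup G] (L : G → 𝓛) (m : ℕ) : Prop :=
  ∀ g ∈ ZSet G m, ∀ i : Fin m, ∀ h : G, L h = L (g i) →
    ∃ g' ∈ ZSet G m, (∀ j, L (g' j) = L (g j)) ∧ g' i = h

/-- A labeling function is friendly if it is `m`-friendly for all `m ≥ 3`. -/
def Friendly {G 𝓛 : Type} [AddCommGroup G] (L : G → 𝓛) : Prop :=
  ∀ m, 3 ≤ m → IsMFriendly L m

/-- A finite rooted tree, given by a parent function on a finite vertex set. -/
structure PhyloTree where
  V : Type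
  fintypeV : Fintype V
  root : V
  parent : V → V
  parent_root : parent root = root
  reaches_root : ∀ v, ∃ n : ℕ, parent^[n] v = root

attribute [instance] PhyloTree.fintypeV

namespace PhyloTree

variable (T : PhyloTree)

/-- A vertex is a leaf if it has no children. -/
def IsLeaf (v : T.V) : Prop := ∀ u, T.parent u = v → u = v

/-- The type of leaves of `T`. -/
def Leaf : Type := {v : T.V // T.IsLeaf v}

noncomputable instance : Fintype T.Leaf :=
  have : DecidablePred T.IsLeaf := Classical.decPred _
  Subtype.fintype _

/-- `u` is a (weak) descendant of `v`. -/
def Desc (u v : T.V) : Prop := ∃ n : ℕ, T.parent^[n] u = v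

/-- The edges of `T` are indexed by its vertices: a vertex `v` indexes the edge from
`parent v` to `v`, and the root indexes the extra pendant root edge `e_r`.
`leavesBelow v` is the set `Λ(e)` of leaves below the edge indexed by `v`. -/
noncomputable def leavesBelow (v : T.V) : Finset T.Leaf :=
  Finset.univ.filter fun l => T.Desc l.1 v

/-- An edge is interior if its lower endpoint is neither a leaf nor the root
(the latter excluding the pendant root edge). -/
def InteriorEdge (e : T.V) : Prop := ¬ T.IsLeaf e ∧ e ≠ T.root

/-- The edge set of the subtree `T_{e,-}`: the edge `e` together with all edges below it. -/
def Eminus (e : T.V) : Set T.V := {e' | T.Desc e' e}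

/-- The edge set of the subtree `T_{e,+}`: the edge `e` together with all edges not in `T_{e,-}`. -/
def Eplus (e : T.V) : Set T.V := {e' | e' = e ∨ ¬ T.Desc e' e}

theorem mem_Eminus_self (e : T.V) : e ∈ T.Eminus e := ⟨0, rfl⟩

theorem mem_Eplus_self (e : T.V) : e ∈ T.Eplus e := Or.inl rfl

variable {G 𝓛 : Type} [AddCommGroup G] [Fintype G]

/-- `g(e)`: the sum of the group elements at the leaves below the edge `e`. -/
noncomputable def gsum (g : T.Leaf → G) (e : T.V) : G := ∑ l ∈ T.leavesBelow e, g l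

/-- The consistent labelings of the subtree with edge set `S`. -/
def consLab (L : G → 𝓛) (S : Set T.V) : Set (↥S → 𝓛) :=
  Set.range fun g : T.Leaf → G => fun e' : ↥S => L (T.gsum g e'.1)

/-- The consistent labelings of the whole tree `T`, i.e. the image of `L^T`. -/
def consLabFull (L : G → 𝓛) : Set (T.V → 𝓛) :=
  Set.range fun g : T.Leaf → G => fun e : T.V => L (T.gsum g e)

/-- The toric ideal of the subtree with edge set `S` (in Fourier coordinates `q_λ`,
`λ` a consistent labeling): the kernel of the monomial map `q_λ ↦ ∏_e a^{(e)}_{λ(e)}`. -/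
noncomputable def toricIdeal (L : G → 𝓛) (S : Set T.V) :
    Ideal (MvPolynomial ↥(T.consLab L S) ℂ) :=
  RingHom.ker (aeval (R := ℂ)
    fun μ : ↥(T.consLab L S) => ∏ e' : ↥S, (X (e', μ.1 e') : MvPolynomial (↥S × 𝓛) ℂ))

/-- The toric ideal `I_{T,L}` of the tree `T`. -/
noncomputable def toricIdealFull (L : G → 𝓛) :
    Ideal (MvPolynomial ↥(T.consLabFull L) ℂ) :=
  RingHom.ker (aeval (R := ℂ)
    fun μ : ↥(T.consLabFull L) => ∏ e : T.V, (X (e, μ.1 e) : MvPolynomial (T.V × 𝓛) ℂ))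

/-- Glue a labeling of `T_{e,-}` and a labeling of `T_{e,+}` into a labeling of `T`. -/
noncomputable def glue (e : T.V) (μ : ↥(T.Eminus e) → 𝓛) (ν : ↥(T.Eplus e) → 𝓛) :
    T.V → 𝓛 :=
  fun e' => if h : T.Desc e' e then μ ⟨e', h⟩ else ν ⟨e', Or.inr h⟩

/-- `mix e λ₁ λ₂` agrees with `λ₁` on `T_{e,-}` and with `λ₂` on the rest of `T`. -/
noncomputable def mix (e : T.V) (f g : T.V → 𝓛) : T.V → 𝓛 :=
  fun e' => if T.Desc e' e then f e' else g e'

end PhyloTree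


theorem zmem_iff {G : Type} [AddCommGroup G] (t : ℕ) (f : Fin (t + 1) → G) :
    f ∈ ZSet G (t + 1) ↔ ∑ i : Fin t, f i.castSucc = f (Fin.last t) := by
  have e1 : ∀ g : Fin (t + 1) → G,
      (∑ i ∈ Finset.univ.filter fun i : Fin (t + 1) => (i : ℕ) < t + 1 - 1, g i) =
        ∑ i : Fin t, g i.castSucc := by
    intro g
    rw [Finset.sum_filter, Fin.sum_univ_castSucc]
    simp
  have e2 : ∀ g : Fin (t + 1) → G,
      (∑ i ∈ Finset.univ.filter fun i : Fin (t + 1) => ¬ (i : ℕ) < t + 1 - 1, g i) =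
        g (Fin.last t) := by
    intro g
    rw [Finset.sum_filter, Fin.sum_univ_castSucc]
    simp
  constructor
  · intro hf
    have := hf
    simp only [ZSet, Set.mem_setOf_eq] at this
    rw [e1, e2] at this
    exact this
  · intro hf
    simp only [ZSet, Set.mem_setOf_eq]
    rw [e1, e2]
    exact hf

theorem friendly_snoc {G 𝓛 : Type} [AddCommGroup G] {L : G → 𝓛} (hL : Friendly L)
    (t : ℕ) (ht : 2 ≤ t) (a : Fin (t + 1) → G)
    (ha : ∑ i : Fin t, a i.castSucc = a (Fin.last t)) (j : Fin (t + 1)) (h : G)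
    (hh : L h = L (a j)) :
    ∃ a' : Fin (t + 1) → G, (∑ i : Fin t, a' i.castSucc = a' (Fin.last t)) ∧
      (∀ i, L (a' i) = L (a i)) ∧ a' j = h := by
  obtain ⟨a', ha', hlab, hj⟩ := hL (t + 1) (by omega) a ((zmem_iff t a).mpr ha) j h hh
  exact ⟨a', (zmem_iff t a').mp ha', hlab, hj⟩

namespace PhyloTree

variable {T : PhyloTree}

theorem desc_rfl (v : T.V) : T.Desc v v := ⟨0, rfl⟩

theorem Desc.trans {u v w : T.V} (h1 : T.Desc u v) (h2 : T.Desc v w) : T.Desc u w := by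
  obtain ⟨m, rfl⟩ := h1; obtain ⟨n, rfl⟩ := h2
  exact ⟨n + m, (Function.iterate_add_apply _ n m u)⟩

theorem iterate_parent_root (n : ℕ) : T.parent^[n] T.root = T.root := by
  induction n with
  | zero => rfl
  | succ n ih => rw [Function.iterate_succ_apply', ih, T.parent_root]

theorem desc_root (v : T.V) : T.Desc v T.root := T.reaches_root v

theorem desc_antisymm {u v : T.V} (h1 : T.Desc u v) (h2 : T.Desc v u) : u = v := by
  obtain ⟨m, hm⟩ := h1; obtain ⟨n, hn⟩ := h2
  have hper : T.parent^[n + m] u = u := by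
    rw [Function.iterate_add_apply, hm, hn]
  rcases Nat.eq_zero_or_pos (n + m) with h0 | hpos
  · have hm0 : m = 0 := by omega
    subst hm0; exact hm
  · obtain ⟨k, hk⟩ := T.reaches_root u
    have hiter : ∀ j : ℕ, T.parent^[j * (n + m)] u = u := by
      intro j; induction j with
      | zero => simp
      | succ j ih =>
        rw [Nat.succ_mul, Function.iterate_add_apply, hper, ih]
    have hle : k ≤ k * (n + m) := Nat.le_mul_of_pos_right k hpos
    have hroot : u = T.root := by
      calc u = T.parent^[k * (n + m)] u := (hiter k).symm
        _ = T.parent^[k * (n + m) - k] (T.parent^[k] u) := by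
            rw [← Function.iterate_add_apply]; congr 1; omega
        _ = T.root := by rw [hk, iterate_parent_root]
    rw [hroot] at hm ⊢
    rw [iterate_parent_root] at hm
    exact hm

theorem desc_parent (v : T.V) : T.Desc v (T.parent v) := ⟨1, rfl⟩

theorem IsLeaf.desc_eq {v : T.V} (hv : T.IsLeaf v) {u : T.V} (h : T.Desc u v) : u = v := by
  obtain ⟨n, hn⟩ := h
  have key : ∀ (n : ℕ) (u : T.V), T.parent^[n] u = v → u = v := by
    intro n
    induction n with
    | zero => intro u hn; exact hn
    | succ n ih =>
      intro u hn
      rw [Function.iterate_succ_apply'] at hn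
      exact ih _ (hv _ hn)
  exact key n u hn

theorem desc_total {l u v : T.V} (h1 : T.Desc l u) (h2 : T.Desc l v) :
    T.Desc u v ∨ T.Desc v u := by
  obtain ⟨a, ha⟩ := h1; obtain ⟨b, hb⟩ := h2
  rcases le_total a b with hab | hab
  · left; exact ⟨b - a, by rw [← ha, ← Function.iterate_add_apply]; rw [← hb]; congr 1; omega⟩
  · right; exact ⟨a - b, by rw [← hb, ← Function.iterate_add_apply]; rw [← ha]; congr 1; omega⟩

/-- The set of children of a vertex. -/
noncomputable def childs (T : PhyloTree) (v : T.V) : Finset T.V :=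
  Finset.univ.filter fun u => T.parent u = v ∧ u ≠ v

theorem mem_childs {u v : T.V} : u ∈ T.childs v ↔ T.parent u = v ∧ u ≠ v := by
  simp [childs]

theorem childs_desc {u v : T.V} (h : u ∈ T.childs v) : T.Desc u v :=
  ⟨1, (mem_childs.mp h).1⟩

theorem not_isLeaf_iff {v : T.V} : ¬ T.IsLeaf v ↔ (T.childs v).Nonempty := by
  constructor
  · intro h
    rw [IsLeaf] at h; push_neg at h
    obtain ⟨u, hu1, hu2⟩ := h
    exact ⟨u, mem_childs.mpr ⟨hu1, hu2⟩⟩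
  · rintro ⟨u, hu⟩ h
    rw [mem_childs] at hu
    exact hu.2 (h u hu.1)

theorem parent_ne_of_ne_root {v : T.V} (h : v ≠ T.root) : T.parent v ≠ v := by
  intro hp
  obtain ⟨n, hn⟩ := T.reaches_root v
  apply h
  rw [← hn]
  clear hn
  induction n with
  | zero => rfl
  | succ n ih => rw [Function.iterate_succ_apply, hp]; exact ih

/-- A strict descendant passes through a child. -/
theorem exists_child_desc {u v : T.V} (h : T.Desc u v) (hne : u ≠ v) :
    ∃ c ∈ T.childs v, T.Desc u c := by
  obtain ⟨n, hn⟩ := h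
  have key : ∀ (n : ℕ) (u : T.V), T.parent^[n] u = v → u ≠ v → ∃ c ∈ T.childs v, T.Desc u c := by
    intro n
    induction n with
    | zero => intro u hn hne; exact absurd hn hne
    | succ n ih =>
      intro u hn hne
      by_cases hc : T.parent^[n] u = v
      · exact ih u hc hne
      · refine ⟨T.parent^[n] u, mem_childs.mpr ⟨?_, hc⟩, ⟨n, rfl⟩⟩
        rw [← hn, Function.iterate_succ_apply']
  exact key n u hn hne

/-- Two distinct children are `Desc`-incomparable. -/
theorem childs_eq_of_desc {c c' v : T.V} (hc : c ∈ T.childs v) (hc' : c' ∈ T.childs v)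
    (h : T.Desc c c') : c = c' := by
  rw [mem_childs] at hc hc'
  obtain ⟨m, hm⟩ := h
  match m, hm with
  | 0, hm => exact hm
  | (m+1 : ℕ), hm =>
    exfalso
    apply hc'.2
    apply desc_antisymm (u := c') (v := v) ⟨1, hc'.1⟩
    refine ⟨m, ?_⟩
    rw [← hm, Function.iterate_succ_apply, hc.1]

theorem childs_disjoint_desc {c c' v u : T.V} (hc : c ∈ T.childs v) (hc' : c' ∈ T.childs v)
    (hne : c ≠ c') (h1 : T.Desc u c) (h2 : T.Desc u c') : False := by
  rcases desc_total h1 h2 with h | h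
  · exact hne (childs_eq_of_desc hc hc' h)
  · exact hne (childs_eq_of_desc hc' hc h).symm

theorem mem_leavesBelow {l : T.Leaf} {v : T.V} : l ∈ T.leavesBelow v ↔ T.Desc l.1 v := by
  simp [leavesBelow]

theorem leavesBelow_leaf {v : T.V} (hv : T.IsLeaf v) :
    T.leavesBelow v = {(⟨v, hv⟩ : T.Leaf)} := by
  ext l
  rw [mem_leavesBelow, show (l ∈ ({(⟨v, hv⟩ : T.Leaf)} : Finset T.Leaf)) ↔ l = ⟨v, hv⟩ from
    Finset.mem_singleton]
  constructor
  · intro h; exact Subtype.ext (hv.desc_eq h)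
  · rintro rfl; exact desc_rfl v

theorem leavesBelow_eq_biUnion {v : T.V} (hv : ¬ T.IsLeaf v) :
    T.leavesBelow v = (T.childs v).biUnion (fun c => T.leavesBelow c) := by
  ext l
  rw [mem_leavesBelow, Finset.mem_biUnion]
  constructor
  · intro h
    have hne : l.1 ≠ v := fun he => hv (he ▸ l.2)
    obtain ⟨c, hc, hdc⟩ := exists_child_desc h hne
    exact ⟨c, hc, mem_leavesBelow.mpr hdc⟩
  · rintro ⟨c, hc, hl⟩
    exact (mem_leavesBelow.mp hl).trans (childs_desc hc)

variable {G : Type} [AddCommGroup G] [Fintype G]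

theorem gsum_childs (g : T.Leaf → G) {v : T.V} (hv : ¬ T.IsLeaf v) :
    T.gsum g v = ∑ c ∈ T.childs v, T.gsum g c := by
  have hdisj : (↑(T.childs v) : Set T.V).PairwiseDisjoint (fun c => T.leavesBelow c) := by
    intro c hc c' hc' hne
    simp only [Function.onFun, Finset.disjoint_left]
    intro l hl hl'
    exact childs_disjoint_desc (by simpa using hc) (by simpa using hc') hne
      (mem_leavesBelow.mp hl) (mem_leavesBelow.mp hl')
  rw [gsum, leavesBelow_eq_biUnion hv, Finset.sum_biUnion hdisj]; rfl

theorem gsum_leaf (g : T.Leaf → G) {v : T.V} (hv : T.IsLeaf v) :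
    T.gsum g v = g ⟨v, hv⟩ := by
  rw [gsum, leavesBelow_leaf hv]; exact Finset.sum_singleton _ _

theorem gsum_congr {g g' : T.Leaf → G} {v : T.V}
    (h : ∀ l : T.Leaf, T.Desc l.1 v → g' l = g l) : T.gsum g' v = T.gsum g v :=
  Finset.sum_congr rfl fun l hl => h l (mem_leavesBelow.mp hl)

theorem gsum_eq_of_outside {g g' : T.Leaf → G} {w : T.V}
    (hout : ∀ l : T.Leaf, ¬ T.Desc l.1 w → g' l = g l)
    (hw : T.gsum g' w = T.gsum g w) {e : T.V} (he : ¬ T.Desc e w) :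
    T.gsum g' e = T.gsum g e := by
  classical
  have split : ∀ f : T.Leaf → G, T.gsum f e =
      (∑ l ∈ (T.leavesBelow e).filter (fun l => T.Desc l.1 w), f l) +
      ∑ l ∈ (T.leavesBelow e).filter (fun l => ¬ T.Desc l.1 w), f l := fun f =>
    (Finset.sum_filter_add_sum_filter_not _ _ f).symm
  rw [split g', split g]
  have h2 : (∑ l ∈ (T.leavesBelow e).filter (fun l => ¬ T.Desc l.1 w), g' l) =
      ∑ l ∈ (T.leavesBelow e).filter (fun l => ¬ T.Desc l.1 w), g l :=
    Finset.sum_congr rfl fun l hl => hout l (Finset.mem_filter.mp hl).2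
  rw [h2]
  congr 1
  by_cases hwe : T.Desc w e
  · have hset : (T.leavesBelow e).filter (fun l => T.Desc l.1 w) = T.leavesBelow w := by
      ext l
      simp only [Finset.mem_filter, mem_leavesBelow]
      exact ⟨fun h => h.2, fun h => ⟨h.trans hwe, h⟩⟩
    rw [hset]; exact hw
  · have hset : (T.leavesBelow e).filter (fun l => T.Desc l.1 w) = ∅ := by
      ext l
      simp only [Finset.mem_filter, mem_leavesBelow, Finset.notMem_empty, iff_false, not_and]
      intro h1 h2
      rcases desc_total h1 h2 with h | h
      · exact he h
      · exact hwe h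
    rw [hset]; simp

variable {𝓛 : Type} {L : G → 𝓛}

theorem sum_childs_equiv {v : T.V} (f : T.V → G) :
    ∑ c ∈ T.childs v, f c =
      ∑ i : Fin (T.childs v).card, f ((T.childs v).equivFin.symm i).1 := by
  rw [← Finset.sum_attach (T.childs v) f]
  exact Fintype.sum_equiv (T.childs v).equivFin _ _ (by simp)

/-- Friendliness applied at a non-leaf vertex: prescribe a new value at the parent edge,
keeping the labels of all children edges. -/
theorem exists_targets_top (hL : Friendly L) {v : T.V} (hv : ¬ T.IsLeaf v)
    (g : T.Leaf → G) (h : G) (hh : L h = L (T.gsum g v)) :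
    ∃ x : T.V → G, (∑ c ∈ T.childs v, x c) = h ∧
      ∀ c ∈ T.childs v, L (x c) = L (T.gsum g c) := by
  classical
  have hpos : 0 < (T.childs v).card := Finset.card_pos.mpr (not_isLeaf_iff.mp hv)
  rcases lt_or_ge (T.childs v).card 2 with ht | ht
  · have ht1 : (T.childs v).card = 1 := by omega
    obtain ⟨c, hc⟩ := Finset.card_eq_one.mp ht1
    have hgv : T.gsum g v = T.gsum g c := by
      rw [gsum_childs g hv, hc, Finset.sum_singleton]
    refine ⟨fun _ => h, ?_, ?_⟩
    · rw [hc, Finset.sum_singleton]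
    · intro c' hc'
      rw [hc, Finset.mem_singleton] at hc'
      subst hc'
      rw [hh, hgv]
  · set t := (T.childs v).card with htdef
    set σ := (T.childs v).equivFin with hσ
    set a : Fin (t + 1) → G :=
      Fin.snoc (fun i => T.gsum g (σ.symm i).1) (T.gsum g v) with hadef
    have ha : ∑ i : Fin t, a i.castSucc = a (Fin.last t) := by
      simp only [hadef, Fin.snoc_castSucc, Fin.snoc_last]
      rw [← sum_childs_equiv, ← gsum_childs g hv]
    have hha : L h = L (a (Fin.last t)) := by
      rw [hadef]; simp only [Fin.snoc_last]; exact hh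
    obtain ⟨a', ha', hlab, hj⟩ := friendly_snoc hL t ht a ha (Fin.last t) h hha
    refine ⟨fun c => if hc : c ∈ T.childs v then a' (σ ⟨c, hc⟩).castSucc else 0, ?_, ?_⟩
    · calc (∑ c ∈ T.childs v,
            if hc : c ∈ T.childs v then a' (σ ⟨c, hc⟩).castSucc else 0)
          = ∑ c ∈ (T.childs v).attach, a' (σ c).castSucc := by
            rw [← Finset.sum_attach (T.childs v)
              (fun c => if hc : c ∈ T.childs v then a' (σ ⟨c, hc⟩).castSucc else 0)]
            exact Finset.sum_congr rfl fun c _ => by rw [dif_pos c.2]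
        _ = ∑ i : Fin t, a' i.castSucc := Fintype.sum_equiv σ _ _ (by simp)
        _ = a' (Fin.last t) := ha'
        _ = h := hj
    · intro c hc
      beta_reduce
      rw [dif_pos hc, hlab]
      rw [hadef]
      simp only [Fin.snoc_castSucc, Equiv.symm_apply_apply]

/-- Friendliness applied at a non-leaf vertex: prescribe a new value at one child edge,
keeping the labels of the other children edges and of the parent edge. -/
theorem exists_targets_child (hL : Friendly L) {v : T.V} (hv : ¬ T.IsLeaf v)
    (g : T.Leaf → G) {c₀ : T.V} (hc₀ : c₀ ∈ T.childs v) (h : G)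
    (hh : L h = L (T.gsum g c₀)) :
    ∃ (x : T.V → G) (y : G), (∑ c ∈ T.childs v, x c) = y ∧
      (∀ c ∈ T.childs v, L (x c) = L (T.gsum g c)) ∧
      L y = L (T.gsum g v) ∧ x c₀ = h := by
  classical
  have hpos : 0 < (T.childs v).card := Finset.card_pos.mpr (not_isLeaf_iff.mp hv)
  rcases lt_or_ge (T.childs v).card 2 with ht | ht
  · have ht1 : (T.childs v).card = 1 := by omega
    obtain ⟨c, hc⟩ := Finset.card_eq_one.mp ht1
    have hcc : c₀ = c := by rwa [hc, Finset.mem_singleton] at hc₀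
    subst hcc
    have hgv : T.gsum g v = T.gsum g c₀ := by
      rw [gsum_childs g hv, hc, Finset.sum_singleton]
    refine ⟨fun _ => h, h, ?_, ?_, ?_, rfl⟩
    · rw [hc, Finset.sum_singleton]
    · intro c' hc'
      rw [hc, Finset.mem_singleton] at hc'
      subst hc'
      exact hh
    · rw [hh, hgv]
  · set t := (T.childs v).card with htdef
    set σ := (T.childs v).equivFin with hσ
    set a : Fin (t + 1) → G :=
      Fin.snoc (fun i => T.gsum g (σ.symm i).1) (T.gsum g v) with hadef
    have ha : ∑ i : Fin t, a i.castSucc = a (Fin.last t) := by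
      simp only [hadef, Fin.snoc_castSucc, Fin.snoc_last]
      rw [← sum_childs_equiv, ← gsum_childs g hv]
    have hha : L h = L (a (σ ⟨c₀, hc₀⟩).castSucc) := by
      rw [hadef]
      simp only [Fin.snoc_castSucc, Equiv.symm_apply_apply]
      exact hh
    obtain ⟨a', ha', hlab, hj⟩ :=
      friendly_snoc hL t ht a ha ((σ ⟨c₀, hc₀⟩).castSucc) h hha
    refine ⟨fun c => if hc : c ∈ T.childs v then a' (σ ⟨c, hc⟩).castSucc else 0,
      a' (Fin.last t), ?_, ?_, ?_, ?_⟩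
    · calc (∑ c ∈ T.childs v,
            if hc : c ∈ T.childs v then a' (σ ⟨c, hc⟩).castSucc else 0)
          = ∑ c ∈ (T.childs v).attach, a' (σ c).castSucc := by
            rw [← Finset.sum_attach (T.childs v)
              (fun c => if hc : c ∈ T.childs v then a' (σ ⟨c, hc⟩).castSucc else 0)]
            exact Finset.sum_congr rfl fun c _ => by rw [dif_pos c.2]
        _ = ∑ i : Fin t, a' i.castSucc := Fintype.sum_equiv σ _ _ (by simp)
        _ = a' (Fin.last t) := ha'
    · intro c hc
      beta_reduce
      rw [dif_pos hc, hlab]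
      rw [hadef]
      simp only [Fin.snoc_castSucc, Equiv.symm_apply_apply]
    · rw [hlab]
      rw [hadef]
      simp only [Fin.snoc_last]
    · beta_reduce
      rw [dif_pos hc₀]
      exact hj


/-- Number of (weak) descendants of a vertex; a termination measure for downward recursion. -/
noncomputable def descCard (T : PhyloTree) (v : T.V) : ℕ :=
  (Finset.univ.filter fun u => T.Desc u v).card

theorem descCard_lt_of_childs {c v : T.V} (hc : c ∈ T.childs v) :
    T.descCard c < T.descCard v := by
  apply Finset.card_lt_card
  rw [Finset.ssubset_def]
  constructor
  · intro u hu
    simp only [Finset.mem_filter, Finset.mem_univ, true_and] at hu ⊢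
    exact hu.trans (childs_desc hc)
  · intro hsub
    have hv : v ∈ Finset.univ.filter fun u => T.Desc u v := by
      simp [desc_rfl]
    have hvc : T.Desc v c := by
      have := hsub hv
      simpa using this
    exact (mem_childs.mp hc).2 (desc_antisymm (childs_desc hc) hvc)

/-- Distance to the root; a termination measure for upward recursion. -/
noncomputable def rootDist (T : PhyloTree) (v : T.V) : ℕ := Nat.find (T.reaches_root v)

theorem rootDist_parent_lt {v : T.V} (h : v ≠ T.root) :
    T.rootDist (T.parent v) < T.rootDist v := by
  have hfind : T.parent^[T.rootDist v] v = T.root := Nat.find_spec (T.reaches_root v)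
  have hne : T.rootDist v ≠ 0 := by
    intro h0
    rw [h0] at hfind
    exact h hfind
  have hstep : T.parent^[T.rootDist v - 1] (T.parent v) = T.root := by
    have h1 : T.parent^[T.rootDist v - 1 + 1] v = T.root := by
      rw [show T.rootDist v - 1 + 1 = T.rootDist v by omega]
      exact hfind
    rw [Function.iterate_succ_apply] at h1
    exact h1
  have h2 : T.rootDist (T.parent v) ≤ T.rootDist v - 1 :=
    Nat.find_min' (T.reaches_root (T.parent v)) hstep
  omega

/-- Realize prescribed values on an arbitrary set of children edges simultaneously,
given the single-vertex realization property at each child. -/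
theorem multi_aux {v : T.V}
    (hB : ∀ c ∈ T.childs v, ∀ (g : T.Leaf → G) (x : G), L x = L (T.gsum g c) →
      ∃ gg : T.Leaf → G, (∀ l : T.Leaf, ¬ T.Desc l.1 c → gg l = g l) ∧
        T.gsum gg c = x ∧ ∀ e : T.V, T.Desc e c → L (T.gsum gg e) = L (T.gsum g e))
    (g : T.Leaf → G) (xc : T.V → G)
    (hxc : ∀ c ∈ T.childs v, L (xc c) = L (T.gsum g c)) :
    ∀ s : Finset T.V, s ⊆ T.childs v →
      ∃ gg : T.Leaf → G, (∀ l : T.Leaf, (∀ c ∈ s, ¬ T.Desc l.1 c) → gg l = g l) ∧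
        (∀ c ∈ s, T.gsum gg c = xc c) ∧
        (∀ e : T.V, (∃ c ∈ s, T.Desc e c) → L (T.gsum gg e) = L (T.gsum g e)) := by
  classical
  intro s
  induction s using Finset.induction_on with
  | empty =>
    intro _
    exact ⟨g, fun l _ => rfl, fun c hc => absurd hc (Finset.notMem_empty c),
      fun e he => by obtain ⟨c, hc, -⟩ := he; exact absurd hc (Finset.notMem_empty c)⟩
  | @insert c₀ s' hc₀s' ih =>
    intro hsub
    have hc₀ : c₀ ∈ T.childs v := hsub (Finset.mem_insert_self _ _)
    have hs' : s' ⊆ T.childs v := (Finset.subset_insert c₀ s').trans hsub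
    obtain ⟨gg', hout', hval', hlab'⟩ := ih hs'
    have hne : ∀ c ∈ s', c ≠ c₀ := fun c hc hEq => hc₀s' (hEq ▸ hc)
    have hgc₀ : T.gsum gg' c₀ = T.gsum g c₀ := by
      apply gsum_congr
      intro l hl
      exact hout' l (fun c hc hdl =>
        childs_disjoint_desc (hs' hc) hc₀ (hne c hc) hdl hl)
    obtain ⟨gg, hout, hval, hlab⟩ := hB c₀ hc₀ gg' (xc c₀) (by rw [hgc₀]; exact hxc c₀ hc₀)
    refine ⟨gg, ?_, ?_, ?_⟩
    · intro l hl
      rw [hout l (hl c₀ (Finset.mem_insert_self _ _)),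
        hout' l (fun c hc => hl c (Finset.mem_insert_of_mem hc))]
    · intro c hc
      rcases Finset.mem_insert.mp hc with rfl | hc
      · rw [hval]
      · have hgc : T.gsum gg c = T.gsum gg' c := by
          apply gsum_congr
          intro l hl
          exact hout l (fun hdl =>
            childs_disjoint_desc (hs' hc) hc₀ (hne c hc) hl hdl)
        rw [hgc]
        exact hval' c hc
    · intro e he
      obtain ⟨c, hc, hec⟩ := he
      rcases Finset.mem_insert.mp hc with rfl | hc
      · have h1 : L (T.gsum gg e) = L (T.gsum gg' e) := hlab e hec
        have h2 : T.gsum gg' e = T.gsum g e := by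
          apply gsum_congr
          intro l hl
          exact hout' l (fun c' hc' hdl =>
            childs_disjoint_desc (hs' hc') hc₀ (hne c' hc') hdl (hl.trans hec))
        rw [h1, h2]
      · have h1 : T.gsum gg e = T.gsum gg' e := by
          apply gsum_congr
          intro l hl
          exact hout l (fun hdl =>
            childs_disjoint_desc (hs' hc) hc₀ (hne c hc) (hl.trans hec) hdl)
        rw [h1]
        exact hlab' e ⟨c, hc, hec⟩

variable (hL : Friendly L)
include hL

/-- Any value with the correct label can be realized exactly at an edge, modifying the leaf
assignment only below the edge and preserving all labels below. -/
theorem realize_below : ∀ (N : ℕ) (v : T.V), T.descCard v ≤ N →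
    ∀ (g : T.Leaf → G) (x : G), L x = L (T.gsum g v) →
      ∃ gg : T.Leaf → G, (∀ l : T.Leaf, ¬ T.Desc l.1 v → gg l = g l) ∧
        T.gsum gg v = x ∧ ∀ e : T.V, T.Desc e v → L (T.gsum gg e) = L (T.gsum g e) := by
  intro N
  induction N with
  | zero =>
    intro v hN
    exfalso
    have : 0 < T.descCard v := Finset.card_pos.mpr ⟨v, by simp [descCard, desc_rfl]⟩
    omega
  | succ N ih =>
    intro v hN g x hx
    by_cases hv : T.IsLeaf v
    · refine ⟨Function.update g ⟨v, hv⟩ x, ?_, ?_, ?_⟩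
      · intro l hl
        apply Function.update_of_ne
        intro hEq
        exact hl (by rw [hEq]; exact desc_rfl v)
      · rw [gsum_leaf _ hv]; exact Function.update_self _ _ _
      · intro e he
        have hev : e = v := hv.desc_eq he
        subst hev
        rw [gsum_leaf _ hv]
        exact (congrArg L (Function.update_self _ _ _)).trans hx
    · obtain ⟨xc, hsum, hxc⟩ := exists_targets_top hL hv g x hx
      have hB : ∀ c ∈ T.childs v, ∀ (g' : T.Leaf → G) (x' : G), L x' = L (T.gsum g' c) →
          ∃ gg : T.Leaf → G, (∀ l : T.Leaf, ¬ T.Desc l.1 c → gg l = g' l) ∧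
            T.gsum gg c = x' ∧ ∀ e : T.V, T.Desc e c → L (T.gsum gg e) = L (T.gsum g' e) := by
        intro c hc g' x' hx'
        exact ih c (by have := descCard_lt_of_childs hc; omega) g' x' hx'
      obtain ⟨gg, hout, hval, hlab⟩ := multi_aux hB g xc hxc (T.childs v) (subset_refl _)
      have hgs : T.gsum gg v = x := by
        rw [gsum_childs gg hv, Finset.sum_congr rfl (fun c hc => hval c hc), hsum]
      refine ⟨gg, ?_, hgs, ?_⟩
      · intro l hl
        exact hout l (fun c hc hdl => hl (hdl.trans (childs_desc hc)))
      · intro e he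
        by_cases hev : e = v
        · subst hev
          rw [hgs]
          exact hx
        · obtain ⟨c, hc, hec⟩ := exists_child_desc he hev
          exact hlab e ⟨c, hc, hec⟩

theorem realize_below' (v : T.V) (g : T.Leaf → G) (x : G) (hx : L x = L (T.gsum g v)) :
    ∃ gg : T.Leaf → G, (∀ l : T.Leaf, ¬ T.Desc l.1 v → gg l = g l) ∧
      T.gsum gg v = x ∧ ∀ e : T.V, T.Desc e v → L (T.gsum gg e) = L (T.gsum g e) :=
  realize_below hL (T.descCard v) v le_rfl g x hx

/-- Any value with the correct label can be realized exactly at an edge while preserving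
all edge labels of the whole tree. -/
theorem relabel_at : ∀ (N : ℕ) (v : T.V), T.rootDist v ≤ N →
    ∀ (g : T.Leaf → G) (h : G), L h = L (T.gsum g v) →
      ∃ g'' : T.Leaf → G, T.gsum g'' v = h ∧
        ∀ e : T.V, L (T.gsum g'' e) = L (T.gsum g e) := by
  have hroot : ∀ (g : T.Leaf → G) (h : G), L h = L (T.gsum g T.root) →
      ∃ g'' : T.Leaf → G, T.gsum g'' T.root = h ∧
        ∀ e : T.V, L (T.gsum g'' e) = L (T.gsum g e) := by
    intro g h hh
    obtain ⟨gg, -, hval, hlab⟩ := realize_below' hL T.root g h hh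
    exact ⟨gg, hval, fun e => hlab e (desc_root e)⟩
  intro N
  induction N with
  | zero =>
    intro v hN g h hh
    have h0 : T.rootDist v = 0 := by omega
    have hvr : v = T.root := by
      have := Nat.find_spec (T.reaches_root v)
      rw [show Nat.find (T.reaches_root v) = T.rootDist v from rfl, h0] at this
      exact this
    subst hvr
    exact hroot g h hh
  | succ N ih =>
    intro v hN g h hh
    by_cases hvr : v = T.root
    · subst hvr
      exact hroot g h hh
    · have hvw : v ∈ T.childs (T.parent v) :=
        mem_childs.mpr ⟨rfl, fun hEq => (parent_ne_of_ne_root hvr) hEq.symm⟩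
      have hwl : ¬ T.IsLeaf (T.parent v) := not_isLeaf_iff.mpr ⟨v, hvw⟩
      obtain ⟨x, y, hsum, hxlab, hy, hxv⟩ := exists_targets_child hL hwl g hvw h hh
      have hNw : T.rootDist (T.parent v) ≤ N := by
        have := rootDist_parent_lt hvr
        omega
      obtain ⟨g₁, hg₁w, hg₁lab⟩ := ih (T.parent v) hNw g y hy
      have hxc1 : ∀ c ∈ T.childs (T.parent v), L (x c) = L (T.gsum g₁ c) := by
        intro c hc
        rw [hg₁lab c]
        exact hxlab c hc
      obtain ⟨g₂, hout, hval, hlab⟩ := multi_aux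
        (fun c _ g' x' hx' => realize_below' hL c g' x' hx') g₁ x hxc1
        (T.childs (T.parent v)) (subset_refl _)
      have hg₂w : T.gsum g₂ (T.parent v) = T.gsum g₁ (T.parent v) := by
        calc T.gsum g₂ (T.parent v)
            = ∑ c ∈ T.childs (T.parent v), T.gsum g₂ c := gsum_childs g₂ hwl
          _ = ∑ c ∈ T.childs (T.parent v), x c :=
              Finset.sum_congr rfl (fun c hc => hval c hc)
          _ = y := hsum
          _ = T.gsum g₁ (T.parent v) := hg₁w.symm
      refine ⟨g₂, ?_, ?_⟩
      · rw [hval v hvw]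
        exact hxv
      · intro e
        by_cases hew : T.Desc e (T.parent v)
        · by_cases heww : e = T.parent v
          · subst heww
            rw [hg₂w]
            exact hg₁lab _
          · obtain ⟨c, hc, hec⟩ := exists_child_desc hew heww
            rw [hlab e ⟨c, hc, hec⟩]
            exact hg₁lab e
        · have houtw : ∀ l : T.Leaf, ¬ T.Desc l.1 (T.parent v) → g₂ l = g₁ l :=
            fun l hl => hout l (fun c hc hdl => hl (hdl.trans (childs_desc hc)))
          rw [gsum_eq_of_outside houtw hg₂w hew]
          exact hg₁lab e

theorem relabel_at' (v : T.V) (g : T.Leaf → G) (h : G) (hh : L h = L (T.gsum g v)) :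
    ∃ g'' : T.Leaf → G, T.gsum g'' v = h ∧
      ∀ e : T.V, L (T.gsum g'' e) = L (T.gsum g e) :=
  relabel_at hL (T.rootDist v) v le_rfl g h hh


/-- Gluing: a leaf assignment realizing given labels below `e` and one realizing given
labels on and outside `e`, agreeing in label at `e`, can be combined. -/
theorem glue_exists (e : T.V) (g g' : T.Leaf → G)
    (hee : L (T.gsum g' e) = L (T.gsum g e)) :
    ∃ g₃ : T.Leaf → G, (∀ e' : T.V, T.Desc e' e → T.gsum g₃ e' = T.gsum g e') ∧
      (∀ e' : T.V, ¬ T.Desc e' e → L (T.gsum g₃ e') = L (T.gsum g' e')) := by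
  classical
  obtain ⟨g'', hval, hlab⟩ := relabel_at' hL e g' (T.gsum g e) hee.symm
  set g₃ : T.Leaf → G := fun l => if T.Desc l.1 e then g l else g'' l with hg₃
  have hminus : ∀ e' : T.V, T.Desc e' e → T.gsum g₃ e' = T.gsum g e' := by
    intro e' he'
    apply gsum_congr
    intro l hl
    rw [hg₃]
    beta_reduce
    rw [if_pos (hl.trans he')]
  refine ⟨g₃, hminus, ?_⟩
  intro e' he'
  have houtw : ∀ l : T.Leaf, ¬ T.Desc l.1 e → g₃ l = g'' l := by
    intro l hl
    rw [hg₃]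
    beta_reduce
    rw [if_neg hl]
  have hw : T.gsum g₃ e = T.gsum g'' e := by
    rw [hminus e (desc_rfl e), hval]
  rw [gsum_eq_of_outside houtw hw he']
  exact hlab e'

/-- The glued labeling of a consistent labeling of `T_{e,-}` and a compatible consistent
labeling of `T_{e,+}` is a consistent labeling of `T`. -/
theorem glue_mem (e : T.V) {μ : ↥(T.Eminus e) → 𝓛} {ν : ↥(T.Eplus e) → 𝓛}
    (hμ : μ ∈ T.consLab L (T.Eminus e)) (hν : ν ∈ T.consLab L (T.Eplus e))
    (hagree : ν ⟨e, T.mem_Eplus_self e⟩ = μ ⟨e, T.mem_Eminus_self e⟩) :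
    T.glue e μ ν ∈ T.consLabFull L := by
  obtain ⟨g, hg⟩ := hμ
  obtain ⟨g', hg'⟩ := hν
  have hee : L (T.gsum g' e) = L (T.gsum g e) := by
    have h1 : L (T.gsum g' e) = ν ⟨e, T.mem_Eplus_self e⟩ :=
      congrFun hg' ⟨e, T.mem_Eplus_self e⟩
    have h2 : L (T.gsum g e) = μ ⟨e, T.mem_Eminus_self e⟩ :=
      congrFun hg ⟨e, T.mem_Eminus_self e⟩
    rw [h1, h2, hagree]
  obtain ⟨g₃, h1, h2⟩ := glue_exists hL e g g' hee
  refine ⟨g₃, funext fun e' => ?_⟩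
  by_cases hd : T.Desc e' e
  · rw [show T.glue e μ ν e' = μ ⟨e', hd⟩ from dif_pos hd, ← congrFun hg ⟨e', hd⟩]
    beta_reduce
    rw [h1 e' hd]
  · rw [show T.glue e μ ν e' = ν ⟨e', Or.inr hd⟩ from dif_neg hd,
      ← congrFun hg' ⟨e', Or.inr hd⟩]
    beta_reduce
    exact h2 e' hd


end PhyloTree

theorem prod_monomial_one {α σ R : Type} [CommSemiring R] (s : Finset α)
    (u : α → (σ →₀ ℕ)) :
    (∏ a ∈ s, (monomial (u a) (1 : R))) = monomial (∑ a ∈ s, u a) 1 := by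
  classical
  induction s using Finset.induction_on with
  | empty => simp
  | @insert a s ha ih =>
    rw [Finset.prod_insert ha, Finset.sum_insert ha, ih, monomial_mul, one_mul]

theorem prod_X_eq_monomial' {α σ R : Type} [CommSemiring R] (s : Finset α) (f : α → σ) :
    (∏ a ∈ s, (X (f a) : MvPolynomial σ R)) =
      monomial (∑ a ∈ s, Finsupp.single (f a) 1) 1 := by
  rw [← prod_monomial_one]
  exact Finset.prod_congr rfl fun a _ => by
    rw [← pow_one (X (f a)), X_pow_eq_monomial]

theorem sum_pair_indicator {α β : Type} [Fintype α] [DecidableEq α] [DecidableEq β]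
    (q : α → β) (e₀ : α) (l₀ : β) :
    (∑ e' : α, if ((e', q e') = (e₀, l₀)) then (1 : ℕ) else 0) =
      if q e₀ = l₀ then 1 else 0 := by
  have term : ∀ e' : α, (if ((e', q e') = (e₀, l₀)) then (1 : ℕ) else 0) =
      if e' = e₀ then (if q e₀ = l₀ then 1 else 0) else 0 := by
    intro e'
    by_cases h1 : e' = e₀
    · subst h1; simp [Prod.ext_iff]
    · simp [Prod.ext_iff, h1]
  rw [Finset.sum_congr rfl (fun e' _ => term e'), Finset.sum_ite_eq' Finset.univ e₀]
  simp

/-- **Lemma (extension of binomials).** For a friendly labeling `L` and an interior edge `e`,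
a binomial `g = ∏ q_{(l_i,m_i)} − ∏ q_{(l'_i,m_i)}` of the toric ideal of `T_{e,-}` together
with labelings `n_i` of `T_{e,+} ∖ {e}` such that each `(m_i,n_i)` is a consistent labeling
of `T_{e,+}` yields consistent labelings `(l_i,m_i,n_i)`, `(l'_i,m_i,n_i)` of `T`, and the
binomial `g* = ∏ q_{(l_i,m_i,n_i)} − ∏ q_{(l'_i,m_i,n_i)}` lies in `I_{T,L}`. -/
theorem ext_binomial_mem_toricIdeal (T : PhyloTree) {G 𝓛 : Type}
    [AddCommGroup G] [Fintype G]
    (L : G → 𝓛) (hL : Friendly L) (e : T.V) (he : T.InteriorEdge e)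
    (d : ℕ) (r r' : Fin d → ↥(T.consLab L (T.Eminus e)))
    (hrow : ∀ i, (r i).1 ⟨e, T.mem_Eminus_self e⟩ = (r' i).1 ⟨e, T.mem_Eminus_self e⟩)
    (hbin : ((∏ i, X (r i)) - ∏ i, X (r' i)) ∈ T.toricIdeal L (T.Eminus e))
    (s : Fin d → ↥(T.consLab L (T.Eplus e)))
    (hs : ∀ i, (s i).1 ⟨e, T.mem_Eplus_self e⟩ = (r i).1 ⟨e, T.mem_Eminus_self e⟩) :
    ∃ (h : ∀ i, T.glue e (r i).1 (s i).1 ∈ T.consLabFull L)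
      (h' : ∀ i, T.glue e (r' i).1 (s i).1 ∈ T.consLabFull L),
      ((∏ i, X (⟨T.glue e (r i).1 (s i).1, h i⟩ : ↥(T.consLabFull L))) -
        ∏ i, X (⟨T.glue e (r' i).1 (s i).1, h' i⟩ : ↥(T.consLabFull L)))
        ∈ T.toricIdealFull L := by
  classical
  have hmem : ∀ i, T.glue e (r i).1 (s i).1 ∈ T.consLabFull L := fun i =>
    PhyloTree.glue_mem hL e (r i).2 (s i).2 (hs i)
  have hmem' : ∀ i, T.glue e (r' i).1 (s i).1 ∈ T.consLabFull L := fun i =>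
    PhyloTree.glue_mem hL e (r' i).2 (s i).2 (by rw [hs i, hrow i])
  refine ⟨hmem, hmem', ?_⟩
  have key : ∀ (κ : Type) [Fintype κ] (q : Fin d → κ → 𝓛),
      (∏ i : Fin d, ∏ x : κ, (X (x, q i x) : MvPolynomial (κ × 𝓛) ℂ)) =
        monomial (∑ i : Fin d, ∑ x : κ, Finsupp.single (x, q i x) 1) 1 := by
    intro κ _ q
    calc (∏ i : Fin d, ∏ x : κ, (X (x, q i x) : MvPolynomial (κ × 𝓛) ℂ))
        = ∏ i : Fin d, monomial (∑ x : κ, Finsupp.single (x, q i x) 1) (1 : ℂ) :=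
          Finset.prod_congr rfl fun i _ => prod_X_eq_monomial' _ _
      _ = _ := prod_monomial_one _ _
  -- extract exponent equality from `hbin`
  rw [PhyloTree.toricIdeal, RingHom.mem_ker, map_sub, sub_eq_zero, map_prod, map_prod] at hbin
  simp only [aeval_X] at hbin
  have hbin2 : (monomial (∑ i : Fin d, ∑ x : ↥(T.Eminus e),
        Finsupp.single (x, (r i).1 x) 1) (1 : ℂ)) =
      monomial (∑ i : Fin d, ∑ x : ↥(T.Eminus e),
        Finsupp.single (x, (r' i).1 x) 1) 1 :=
    (key ↥(T.Eminus e) (fun i x => (r i).1 x)).symm.trans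
      (hbin.trans (key ↥(T.Eminus e) (fun i x => (r' i).1 x)))
  have hexp := MvPolynomial.monomial_left_injective (one_ne_zero (α := ℂ)) hbin2
  have hcount : ∀ (e₀ : ↥(T.Eminus e)) (l₀ : 𝓛),
      (∑ i : Fin d, if (r i).1 e₀ = l₀ then (1 : ℕ) else 0) =
        ∑ i : Fin d, if (r' i).1 e₀ = l₀ then 1 else 0 := by
    intro e₀ l₀
    have h := DFunLike.congr_fun hexp (e₀, l₀)
    simp only [Finsupp.finset_sum_apply, Finsupp.single_apply] at h
    calc (∑ i : Fin d, if (r i).1 e₀ = l₀ then (1 : ℕ) else 0)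
        = ∑ i : Fin d, ∑ x : ↥(T.Eminus e),
            if ((x, (r i).1 x) = (e₀, l₀)) then (1 : ℕ) else 0 :=
          Finset.sum_congr rfl fun i _ => (sum_pair_indicator ((r i).1) e₀ l₀).symm
      _ = ∑ i : Fin d, ∑ x : ↥(T.Eminus e),
            if ((x, (r' i).1 x) = (e₀, l₀)) then (1 : ℕ) else 0 := h
      _ = ∑ i : Fin d, if (r' i).1 e₀ = l₀ then 1 else 0 :=
          Finset.sum_congr rfl fun i _ => sum_pair_indicator ((r' i).1) e₀ l₀
  -- prove the goal
  rw [PhyloTree.toricIdealFull, RingHom.mem_ker, map_sub, sub_eq_zero, map_prod, map_prod]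
  simp only [aeval_X]
  rw [show (∏ i : Fin d, ∏ e₀ : T.V,
        (X (e₀, (⟨T.glue e (r i).1 (s i).1, hmem i⟩ : ↥(T.consLabFull L)).1 e₀) :
          MvPolynomial (T.V × 𝓛) ℂ)) =
      monomial (∑ i : Fin d, ∑ e₀ : T.V,
        Finsupp.single (e₀, T.glue e (r i).1 (s i).1 e₀) 1) 1 from
    key T.V (fun i e₀ => T.glue e (r i).1 (s i).1 e₀)]
  rw [show (∏ i : Fin d, ∏ e₀ : T.V,
        (X (e₀, (⟨T.glue e (r' i).1 (s i).1, hmem' i⟩ : ↥(T.consLabFull L)).1 e₀) :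
          MvPolynomial (T.V × 𝓛) ℂ)) =
      monomial (∑ i : Fin d, ∑ e₀ : T.V,
        Finsupp.single (e₀, T.glue e (r' i).1 (s i).1 e₀) 1) 1 from
    key T.V (fun i e₀ => T.glue e (r' i).1 (s i).1 e₀)]
  apply congrArg (fun t : (T.V × 𝓛) →₀ ℕ => (monomial t (1 : ℂ)))
  apply Finsupp.ext
  rintro ⟨e₀, l₀⟩
  simp only [Finsupp.finset_sum_apply, Finsupp.single_apply]
  calc (∑ i : Fin d, ∑ x : T.V,
          if ((x, T.glue e (r i).1 (s i).1 x) = (e₀, l₀)) then (1 : ℕ) else 0)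
      = ∑ i : Fin d, if T.glue e (r i).1 (s i).1 e₀ = l₀ then (1 : ℕ) else 0 :=
        Finset.sum_congr rfl fun i _ => sum_pair_indicator _ e₀ l₀
    _ = ∑ i : Fin d, if T.glue e (r' i).1 (s i).1 e₀ = l₀ then (1 : ℕ) else 0 := by
        by_cases hd : T.Desc e₀ e
        · calc (∑ i : Fin d, if T.glue e (r i).1 (s i).1 e₀ = l₀ then (1 : ℕ) else 0)
              = ∑ i : Fin d, if (r i).1 ⟨e₀, hd⟩ = l₀ then (1 : ℕ) else 0 :=
                Finset.sum_congr rfl fun i _ => by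
                  rw [show T.glue e (r i).1 (s i).1 e₀ = (r i).1 ⟨e₀, hd⟩ from dif_pos hd]
            _ = ∑ i : Fin d, if (r' i).1 ⟨e₀, hd⟩ = l₀ then (1 : ℕ) else 0 :=
                hcount ⟨e₀, hd⟩ l₀
            _ = _ := Finset.sum_congr rfl fun i _ => by
                  rw [show T.glue e (r' i).1 (s i).1 e₀ = (r' i).1 ⟨e₀, hd⟩ from dif_pos hd]
        · exact Finset.sum_congr rfl fun i _ => by
            rw [show T.glue e (r i).1 (s i).1 e₀ = (s i).1 ⟨e₀, Or.inr hd⟩ from dif_neg hd,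
              show T.glue e (r' i).1 (s i).1 e₀ = (s i).1 ⟨e₀, Or.inr hd⟩ from dif_neg hd]
    _ = ∑ i : Fin d, ∑ x : T.V,
          if ((x, T.glue e (r' i).1 (s i).1 x) = (e₀, l₀)) then (1 : ℕ) else 0 :=
        Finset.sum_congr rfl fun i _ => (sum_pair_indicator _ e₀ l₀).symm
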